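/- Soundness of the abstraction for condition PC1: let (S, P) be a finite DTMC, h : S → Ŝ a surjective abstraction function, and E ⊆ S an h-saturated effect set with abstract effect Ê = h(E). If the limit of the minimum value iteration of the induced abstract MDP with target Ê is strictly positive at h(s), i.e., ⨆ₙ minreach n (h s) > 0, then the concrete probability of eventually reaching E from s is strictly positive, i.e., Preach s > 0; in particular E is graph-reachable from s in the concrete DTMC. -/
import Mathlib


open scoped Classical

/-- Concretization of an abstract state: `γ(t) = h⁻¹({t})`, as a finset. -/
noncomputable def gammaSet {S T : Type*} [Fintype S] (h : S → T) (t : T) : Finset S :=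
  Finset.univ.filter fun s => h s = t

/-- The concretization of every abstract state is nonempty when `h` is surjective. -/
theorem gammaSet_nonempty {S T : Type*} [Fintype S] (h : S → T)
    (hsurj : Function.Surjective h) (t : T) : (gammaSet h t).Nonempty := by
  obtain ⟨s, hs⟩ := hsurj t
  exact ⟨s, by simp [gammaSet, hs]⟩

/-- Abstract transition function of the induced abstract MDP:
`P̂ ŝ α ŝ' = ∑_{s' ∈ γ(ŝ')} P α s'`. -/
noncomputable def absP {S T : Type*} [Fintype S] (P : S → S → ℝ) (h : S → T)
    (α : S) (t' : T) : ℝ :=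
  ∑ s' ∈ gammaSet h t', P α s'

/-- Minimum value iteration of the induced abstract MDP (state space `T`, actions
`S`, enabled actions `Act(t) = γ(t)`) for an abstract target set `Eh`. -/
noncomputable def absMinReach {S T : Type*} [Fintype S] [Fintype T]
    (P : S → S → ℝ) (h : S → T) (hsurj : Function.Surjective h) (Eh : Set T) :
    ℕ → T → ℝ
  | 0, t => if t ∈ Eh then 1 else 0
  | n + 1, t =>
      if t ∈ Eh then 1
      else (gammaSet h t).inf' (gammaSet_nonempty h hsurj t) fun α =>
        ∑ t' : T, absP P h α t' * absMinReach P h hsurj Eh n t'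

/-- n-step reachability values of a target set `E` in the concrete DTMC. -/
noncomputable def reachN {S : Type*} [Fintype S] (P : S → S → ℝ) (E : Set S) :
    ℕ → S → ℝ
  | 0, s => if s ∈ E then 1 else 0
  | n + 1, s => if s ∈ E then 1 else ∑ s' : S, P s s' * reachN P E n s'

/-- `E` is graph-reachable from `s`. -/
def GraphReach {S : Type*} (P : S → S → ℝ) (E : Set S) (s : S) : Prop :=
  ∃ t ∈ E, Relation.ReflTransGen (fun a b => 0 < P a b) s t

section Aux
variable {S T : Type*} [Fintype S] [Fintype T]

theorem reachN_nonneg (P : S → S → ℝ) (hP : ∀ s s' : S, 0 ≤ P s s') (E : Set S) :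
    ∀ n s, 0 ≤ reachN P E n s := by
  intro n
  induction n with
  | zero => intro s; simp only [reachN]; split <;> norm_num
  | succ n ih =>
    intro s; simp only [reachN]; split
    · norm_num
    · exact Finset.sum_nonneg fun s' _ => mul_nonneg (hP s s') (ih s')

theorem reachN_le_one (P : S → S → ℝ) (hP : ∀ s s' : S, 0 ≤ P s s')
    (hsum : ∀ s : S, ∑ s' : S, P s s' = 1) (E : Set S) :
    ∀ n s, reachN P E n s ≤ 1 := by
  intro n
  induction n with
  | zero => intro s; simp only [reachN]; split <;> norm_num
  | succ n ih =>
    intro s; simp only [reachN]; split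
    · norm_num
    · calc ∑ s' : S, P s s' * reachN P E n s' ≤ ∑ s' : S, P s s' * 1 :=
            Finset.sum_le_sum fun s' _ =>
              mul_le_mul_of_nonneg_left (ih s') (hP s s')
        _ = 1 := by simp [hsum s]

theorem minreach_le_reach (P : S → S → ℝ) (hP : ∀ s s' : S, 0 ≤ P s s')
    (h : S → T) (hsurj : Function.Surjective h) (E : Set S)
    (hsat : E = h ⁻¹' (h '' E)) :
    ∀ n s, absMinReach P h hsurj (h '' E) n (h s) ≤ reachN P E n s := by
  have hmem : ∀ s : S, s ∈ E ↔ h s ∈ h '' E := by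
    intro s; constructor
    · exact fun hs => Set.mem_image_of_mem h hs
    · intro hs; rw [hsat]; exact hs
  intro n
  induction n with
  | zero =>
    intro s; simp only [absMinReach, reachN]
    by_cases hs : s ∈ E
    · rw [if_pos ((hmem s).1 hs), if_pos hs]
    · rw [if_neg (fun hc => hs ((hmem s).2 hc)), if_neg hs]
  | succ n ih =>
    intro s; simp only [absMinReach, reachN]
    by_cases hs : s ∈ E
    · rw [if_pos ((hmem s).1 hs), if_pos hs]
    · rw [if_neg (fun hc => hs ((hmem s).2 hc)), if_neg hs]
      have hself : s ∈ gammaSet h (h s) := by simp [gammaSet]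
      refine le_trans (Finset.inf'_le _ hself) ?_
      have heq : ∑ t' : T, absP P h s t' * absMinReach P h hsurj (h '' E) n t'
          = ∑ s' : S, P s s' * absMinReach P h hsurj (h '' E) n (h s') := by
        rw [← Finset.sum_fiberwise Finset.univ h
          (fun s' => P s s' * absMinReach P h hsurj (h '' E) n (h s'))]
        refine Finset.sum_congr rfl fun t' _ => ?_
        rw [absP, Finset.sum_mul]
        refine Finset.sum_congr ?_ fun s' hs' => ?_
        · simp [gammaSet, Finset.filter_filter]
        · simp only [gammaSet, Finset.mem_filter] at hs'
          rw [hs'.2]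
      rw [heq]
      exact Finset.sum_le_sum fun s' _ =>
        mul_le_mul_of_nonneg_left (ih s') (hP s s')

theorem reach_pos_graphReach (P : S → S → ℝ) (hP : ∀ s s' : S, 0 ≤ P s s')
    (E : Set S) : ∀ n s, 0 < reachN P E n s → GraphReach P E s := by
  intro n
  induction n with
  | zero =>
    intro s hs; simp only [reachN] at hs
    by_cases h0 : s ∈ E
    · exact ⟨s, h0, Relation.ReflTransGen.refl⟩
    · simp [h0] at hs
  | succ n ih =>
    intro s hs; simp only [reachN] at hs
    by_cases h0 : s ∈ E
    · exact ⟨s, h0, Relation.ReflTransGen.refl⟩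
    · rw [if_neg h0] at hs
      obtain ⟨s', -, hs'⟩ := Finset.exists_lt_of_sum_lt (f := fun _ => (0:ℝ))
        (by simpa using hs)
      have hmul := hs'
      rcases mul_pos_iff.1 hmul with ⟨hp, hr⟩ | ⟨hp, -⟩
      · obtain ⟨t, ht, htr⟩ := ih s' hr
        exact ⟨t, ht, Relation.ReflTransGen.head hp htr⟩
      · exact absurd hp (not_lt.2 (hP s s'))

end Aux

/-- Soundness of the abstraction for condition PC1: let (S, P) be a
finite DTMC, h : S → Ŝ a surjective abstraction function, and E ⊆ S an h-saturated
effect set with abstract effect Ê = h(E). If the limit of the minimum value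
iteration of the induced abstract MDP with target Ê is strictly positive at h(s),
then the concrete probability of eventually reaching E from s is strictly positive;
in particular E is graph-reachable from s in the concrete DTMC. -/
theorem abstraction_sound_PC1 {S T : Type*}
    [Fintype S] [Nonempty S] [Fintype T]
    (P : S → S → ℝ)
    (hP : ∀ s s' : S, 0 ≤ P s s')
    (hsum : ∀ s : S, ∑ s' : S, P s s' = 1)
    (h : S → T) (hsurj : Function.Surjective h)
    (E : Set S) (hsat : E = h ⁻¹' (h '' E))
    (s : S)
    (hpos : 0 < ⨆ n : ℕ, absMinReach P h hsurj (h '' E) n (h s)) :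
    0 < (⨆ n : ℕ, reachN P E n s) ∧ GraphReach P E s := by
  have hrange : ∀ n, reachN P E n s ≤ 1 := fun n => reachN_le_one P hP hsum E n s
  obtain ⟨n, hn⟩ : ∃ n, 0 < absMinReach P h hsurj (h '' E) n (h s) := by
    by_contra hc
    push_neg at hc
    exact absurd (ciSup_le hc) (not_le.2 hpos)
  have hr : 0 < reachN P E n s := lt_of_lt_of_le hn (minreach_le_reach P hP h hsurj E hsat n s)
  have hsup : 0 < ⨆ n : ℕ, reachN P E n s :=
    lt_of_lt_of_le hr (le_ciSup (f := fun n => reachN P E n s) ⟨1, Set.forall_mem_range.2 hrange⟩ n)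
  exact ⟨hsup, reach_pos_graphReach P hP E n s hr⟩
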